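/- Let K be an O-cocomplete O-category with a chosen O-colimit φ_Φ : Φ ⇒ colim Φ for each ω-chain Φ of embeddings. Then the assignment sending Φ to colim Φ and sending a natural transformation η : Φ ⇒ Γ (in K) to ⊔_n γ_n ∘ η_n ∘ φ_n^p : colim Φ → colim Γ (where φ and γ are the chosen colimiting cocones) defines a functor, and this functor is locally continuous: it preserves directed suprema of natural transformations, where natural transformations are ordered component-wise. -/

import Mathlib

open CategoryTheory OmegaCompletePartialOrder

universe v u

class OHom (K : Type u) [Category.{v} K] where
  homOrder : ∀ X Y : K, OmegaCompletePartialOrder (X ⟶ Y)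

attribute [instance] OHom.homOrder

/-- An O-category: a category enriched in dcpos with continuous composition. -/
class OCat (K : Type u) [Category.{v} K] extends OHom K where
  comp_mono : ∀ {X Y Z : K} {f f' : X ⟶ Y} {g g' : Y ⟶ Z},
    f ≤ f' → g ≤ g' → f ≫ g ≤ f' ≫ g'
  comp_cont_left : ∀ {X Y Z : K} (g : Y ⟶ Z) (c : Chain (X ⟶ Y))
    (hm : Monotone fun n => c n ≫ g),
    ωSup c ≫ g = ωSup ⟨fun n => c n ≫ g, hm⟩
  comp_cont_right : ∀ {X Y Z : K} (f : X ⟶ Y) (c : Chain (Y ⟶ Z))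
    (hm : Monotone fun n => f ≫ c n),
    f ≫ ωSup c = ωSup ⟨fun n => f ≫ c n, hm⟩

/-- An ω-chain of embeddings in an O-category. -/
structure ChainE (K : Type u) [Category.{v} K] [OCat K] where
  obj : ℕ → K
  e : ∀ n, obj n ⟶ obj (n + 1)
  p : ∀ n, obj (n + 1) ⟶ obj n
  ep₁ : ∀ n, e n ≫ p n = 𝟙 (obj n)
  ep₂ : ∀ n, p n ≫ e n ≤ 𝟙 (obj (n + 1))

/-- An O-colimit of an ω-chain of embeddings: a cocone of embeddings whose
leg/projection composites form an ascending chain with supremum the identity. -/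
structure OColim {K : Type u} [Category.{v} K] [OCat K] (Φ : ChainE K) where
  pt : K
  leg : ∀ n, Φ.obj n ⟶ pt
  legp : ∀ n, pt ⟶ Φ.obj n
  cocone : ∀ n, Φ.e n ≫ leg (n + 1) = leg n
  ep₁ : ∀ n, leg n ≫ legp n = 𝟙 (Φ.obj n)
  ep₂ : ∀ n, legp n ≫ leg n ≤ 𝟙 pt
  mono : Monotone fun n => legp n ≫ leg n
  sup : ωSup ⟨fun n => legp n ≫ leg n, mono⟩ = 𝟙 pt

/-- In an O-cocomplete O-category with chosen O-colimits, the assignment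
Φ ↦ colim Φ, (η : Φ ⇒ Γ) ↦ ⊔ₙ γ_n ∘ η_n ∘ φ_n^p defines a functor on ω-chains of
embeddings (preserving identities and composition), and this functor is locally
continuous: it preserves component-wise directed suprema of natural transformations. -/
theorem colim_functor_locally_continuous {K : Type u} [Category.{v} K] [OCat K]
    (hcocomplete : ∀ Φ : ChainE K, Nonempty (OColim Φ))
    (Φ Γ Δ : ChainE K) (cΦ : OColim Φ) (cΓ : OColim Γ) (cΔ : OColim Δ)
    (η : ∀ n, Φ.obj n ⟶ Γ.obj n) (hη : ∀ n, Φ.e n ≫ η (n + 1) = η n ≫ Γ.e n)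
    (ρ : ∀ n, Γ.obj n ⟶ Δ.obj n) (hρ : ∀ n, Γ.e n ≫ ρ (n + 1) = ρ n ≫ Δ.e n) :
    -- identities are preserved
    (∀ hm : Monotone fun n => cΦ.legp n ≫ 𝟙 (Φ.obj n) ≫ cΦ.leg n,
      ωSup ⟨fun n => cΦ.legp n ≫ 𝟙 (Φ.obj n) ≫ cΦ.leg n, hm⟩ = 𝟙 cΦ.pt) ∧
    -- composition is preserved
    (∀ (h₁ : Monotone fun n => cΦ.legp n ≫ η n ≫ cΓ.leg n)
       (h₂ : Monotone fun n => cΓ.legp n ≫ ρ n ≫ cΔ.leg n)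
       (h₃ : Monotone fun n => cΦ.legp n ≫ (η n ≫ ρ n) ≫ cΔ.leg n),
      ωSup ⟨fun n => cΦ.legp n ≫ (η n ≫ ρ n) ≫ cΔ.leg n, h₃⟩
        = ωSup ⟨fun n => cΦ.legp n ≫ η n ≫ cΓ.leg n, h₁⟩
            ≫ ωSup ⟨fun n => cΓ.legp n ≫ ρ n ≫ cΔ.leg n, h₂⟩) ∧
    -- local continuity: component-wise suprema of natural transformations are preserved
    (∀ (s : ℕ → ∀ n, Φ.obj n ⟶ Γ.obj n)
       (hnat : ∀ k n, Φ.e n ≫ s k (n + 1) = s k n ≫ Γ.e n)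
       (hs : ∀ n, Monotone fun k => s k n)
       (h₄ : ∀ k, Monotone fun n => cΦ.legp n ≫ s k n ≫ cΓ.leg n)
       (h₅ : Monotone fun n => cΦ.legp n ≫ ωSup ⟨fun k => s k n, hs n⟩ ≫ cΓ.leg n)
       (h₆ : Monotone fun k => ωSup ⟨fun n => cΦ.legp n ≫ s k n ≫ cΓ.leg n, h₄ k⟩),
      ωSup ⟨fun n => cΦ.legp n ≫ ωSup ⟨fun k => s k n, hs n⟩ ≫ cΓ.leg n, h₅⟩
        = ωSup ⟨fun k => ωSup ⟨fun n => cΦ.legp n ≫ s k n ≫ cΓ.leg n, h₄ k⟩, h₆⟩) := by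

  refine ⟨?_, ?_, ?_⟩
  · -- identities
    intro hm
    have hchain : (⟨fun n => cΦ.legp n ≫ 𝟙 (Φ.obj n) ≫ cΦ.leg n, hm⟩ : Chain (cΦ.pt ⟶ cΦ.pt))
        = ⟨fun n => cΦ.legp n ≫ cΦ.leg n, cΦ.mono⟩ := by
      congr 2; funext n; simp
    rw [hchain, cΦ.sup]
  · -- composition
    intro h₁ h₂ h₃
    set a : ℕ → (cΦ.pt ⟶ cΓ.pt) := fun n => cΦ.legp n ≫ η n ≫ cΓ.leg n with ha
    set b : ℕ → (cΓ.pt ⟶ cΔ.pt) := fun n => cΓ.legp n ≫ ρ n ≫ cΔ.leg n with hb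
    set c : ℕ → (cΦ.pt ⟶ cΔ.pt) := fun n => cΦ.legp n ≫ (η n ≫ ρ n) ≫ cΔ.leg n with hc
    have key : ∀ n, a n ≫ b n = c n := by
      intro n
      show (cΦ.legp n ≫ η n ≫ cΓ.leg n) ≫ cΓ.legp n ≫ ρ n ≫ cΔ.leg n
        = cΦ.legp n ≫ (η n ≫ ρ n) ≫ cΔ.leg n
      simp only [Category.assoc]
      rw [show cΓ.leg n ≫ cΓ.legp n ≫ ρ n ≫ cΔ.leg n = ρ n ≫ cΔ.leg n from by
        rw [← Category.assoc, cΓ.ep₁, Category.id_comp]]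
    apply le_antisymm
    · apply ωSup_le
      intro n
      calc c n = a n ≫ b n := (key n).symm
        _ ≤ _ := OCat.comp_mono (le_ωSup ⟨a, h₁⟩ n) (le_ωSup ⟨b, h₂⟩ n)
    · have hm1 : Monotone fun n => a n ≫ ωSup (⟨b, h₂⟩ : Chain _) :=
        fun _ _ h => OCat.comp_mono (h₁ h) le_rfl
      rw [OCat.comp_cont_left (ωSup ⟨b, h₂⟩) ⟨a, h₁⟩ hm1]
      apply ωSup_le
      intro n
      have hm2 : Monotone fun m => a n ≫ b m :=
        fun _ _ h => OCat.comp_mono le_rfl (h₂ h)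
      show a n ≫ ωSup ⟨b, h₂⟩ ≤ _
      rw [OCat.comp_cont_right (a n) ⟨b, h₂⟩ hm2]
      apply ωSup_le
      intro m
      show a n ≫ b m ≤ _
      rcases le_total n m with h | h
      · calc a n ≫ b m ≤ a m ≫ b m := OCat.comp_mono (h₁ h) le_rfl
          _ = c m := key m
          _ ≤ _ := le_ωSup ⟨c, h₃⟩ m
      · calc a n ≫ b m ≤ a n ≫ b n := OCat.comp_mono le_rfl (h₂ h)
          _ = c n := key n
          _ ≤ _ := le_ωSup ⟨c, h₃⟩ n
  · -- local continuity
    intro s hnat hs h₄ h₅ h₆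
    apply le_antisymm
    · apply ωSup_le
      intro n
      show cΦ.legp n ≫ ωSup ⟨fun k => s k n, hs n⟩ ≫ cΓ.leg n ≤ _
      have hma : Monotone fun k => s k n ≫ cΓ.leg n :=
        fun _ _ h => OCat.comp_mono (hs n h) le_rfl
      rw [OCat.comp_cont_left (cΓ.leg n) ⟨fun k => s k n, hs n⟩ hma]
      have hmb : Monotone fun k => cΦ.legp n ≫ s k n ≫ cΓ.leg n :=
        fun _ _ h => OCat.comp_mono le_rfl (hma h)
      show cΦ.legp n ≫ ωSup ⟨fun k => s k n ≫ cΓ.leg n, hma⟩ ≤ _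
      rw [OCat.comp_cont_right (cΦ.legp n) ⟨fun k => s k n ≫ cΓ.leg n, hma⟩ hmb]
      apply ωSup_le
      intro k
      calc cΦ.legp n ≫ s k n ≫ cΓ.leg n
          ≤ ωSup ⟨fun n => cΦ.legp n ≫ s k n ≫ cΓ.leg n, h₄ k⟩ :=
            le_ωSup ⟨fun n => cΦ.legp n ≫ s k n ≫ cΓ.leg n, h₄ k⟩ n
        _ ≤ _ := le_ωSup ⟨fun k => ωSup ⟨fun n => cΦ.legp n ≫ s k n ≫ cΓ.leg n, h₄ k⟩, h₆⟩ k
    · apply ωSup_le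
      intro k
      apply ωSup_le
      intro n
      calc cΦ.legp n ≫ s k n ≫ cΓ.leg n
          ≤ cΦ.legp n ≫ ωSup ⟨fun k => s k n, hs n⟩ ≫ cΓ.leg n :=
            OCat.comp_mono le_rfl (OCat.comp_mono (le_ωSup ⟨fun k => s k n, hs n⟩ k) le_rfl)
        _ ≤ _ := le_ωSup ⟨fun n => cΦ.legp n ≫ ωSup ⟨fun k => s k n, hs n⟩ ≫ cΓ.leg n, h₅⟩ n
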